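/- Fix p, q ∈ ℕ, nonnegative reals x_1, …, x_p, constants c_1, …, c_p ∈ ℝ, vectors v_1, …, v_p ∈ ℝ^q, and a symmetric positive definite matrix Ω ∈ ℝ^{q×q}. Define F : ℝ^q × (0,∞)^q → ℝ by F(m, s) = Σ_{j=1}^p [ x_j ⟨v_j, m⟩ − exp( ⟨v_j, m⟩ + (1/2) Σ_{i=1}^q v_{ji}² s_i + c_j ) ] − (1/2) mᵀ Ω m − (1/2) Σ_{i=1}^q Ω_{ii} s_i + (1/2) Σ_{i=1}^q log s_i. Then F is strictly concave on the convex set ℝ^q × (0,∞)^q. -/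

import Mathlib

open MeasureTheory Matrix

private lemma sum_comb {n : ℕ} (f g h : Fin n → ℝ) (a b : ℝ) :
    (∑ i, f i * (a * g i + b * h i)) = a * (∑ i, f i * g i) + b * (∑ i, f i * h i) := by
  rw [Finset.mul_sum, Finset.mul_sum, ← Finset.sum_add_distrib]
  exact Finset.sum_congr rfl fun i _ => by ring

private lemma dot_symm {n : ℕ} (Om : Matrix (Fin n) (Fin n) ℝ) (hs : Om.IsSymm)
    (u w : Fin n → ℝ) : u ⬝ᵥ Om.mulVec w = w ⬝ᵥ Om.mulVec u := by
  rw [Matrix.dotProduct_mulVec, ← Matrix.mulVec_transpose, hs.eq, dotProduct_comm]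

private lemma quad_comb {n : ℕ} (Om : Matrix (Fin n) (Fin n) ℝ) (hs : Om.IsSymm)
    (m m' : Fin n → ℝ) (a b : ℝ) (hab : a + b = 1) :
    a * (m ⬝ᵥ Om.mulVec m) + b * (m' ⬝ᵥ Om.mulVec m')
      - ((a • m + b • m') ⬝ᵥ Om.mulVec (a • m + b • m'))
    = a * b * ((m - m') ⬝ᵥ Om.mulVec (m - m')) := by
  have h1 := dot_symm Om hs m m'
  have hb : b = 1 - a := by linarith
  subst hb
  simp only [Matrix.mulVec_add, Matrix.mulVec_smul, Matrix.mulVec_sub,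
    dotProduct_add, add_dotProduct, smul_dotProduct, dotProduct_smul,
    sub_dotProduct, dotProduct_sub, smul_eq_mul]
  rw [h1]
  ring

private lemma exp_comb {t u a b : ℝ} (ha : 0 ≤ a) (hb : 0 ≤ b) (hab : a + b = 1) :
    Real.exp (a * t + b * u) ≤ a * Real.exp t + b * Real.exp u := by
  have := convexOn_exp.2 (Set.mem_univ t) (Set.mem_univ u) ha hb hab
  simpa [smul_eq_mul] using this

private lemma log_comb {t u a b : ℝ} (ht : 0 < t) (hu : 0 < u)
    (ha : 0 ≤ a) (hb : 0 ≤ b) (hab : a + b = 1) :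
    a * Real.log t + b * Real.log u ≤ Real.log (a * t + b * u) := by
  have := strictConcaveOn_log_Ioi.concaveOn.2 (Set.mem_Ioi.mpr ht) (Set.mem_Ioi.mpr hu)
    ha hb hab
  simpa [smul_eq_mul] using this

private lemma log_comb_strict {t u a b : ℝ} (ht : 0 < t) (hu : 0 < u) (htu : t ≠ u)
    (ha : 0 < a) (hb : 0 < b) (hab : a + b = 1) :
    a * Real.log t + b * Real.log u < Real.log (a * t + b * u) := by
  have := strictConcaveOn_log_Ioi.2 (Set.mem_Ioi.mpr ht) (Set.mem_Ioi.mpr hu) htu ha hb hab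
  simpa [smul_eq_mul] using this

/-- Strict concavity of the per-subject ELBO in the Gaussian variational parameters
`(m, s) ∈ ℝ^q × (0,∞)^q`:
`F(m,s) = Σ_j [x_j ⟨v_j, m⟩ − exp(⟨v_j, m⟩ + (1/2) Σ_i v_{ji}² s_i + c_j)]
  − (1/2) mᵀΩm − (1/2) Σ_i Ω_{ii} s_i + (1/2) Σ_i log s_i`
is strictly concave on the convex set `ℝ^q × (0,∞)^q`, where `Ω` is symmetric positive
definite and the `x_j` are nonnegative. -/
theorem elbo_strictConcaveOn_variational_params
    (p q : ℕ) (x : Fin p → ℝ) (hx : ∀ j, 0 ≤ x j) (c : Fin p → ℝ)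
    (v : Fin p → Fin q → ℝ)
    (Om : Matrix (Fin q) (Fin q) ℝ) (hOsymm : Om.IsSymm) (hOpd : Om.PosDef) :
    StrictConcaveOn ℝ {ms : (Fin q → ℝ) × (Fin q → ℝ) | ∀ i, 0 < ms.2 i}
      (fun ms =>
        (∑ j, (x j * (∑ i, v j i * ms.1 i)
          - Real.exp ((∑ i, v j i * ms.1 i) + (1 / 2) * (∑ i, (v j i) ^ 2 * ms.2 i) + c j)))
        - (1 / 2) * (ms.1 ⬝ᵥ Om.mulVec ms.1)
        - (1 / 2) * ∑ i, Om i i * ms.2 i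
        + (1 / 2) * ∑ i, Real.log (ms.2 i)) := by
  constructor
  · -- convexity of the domain
    intro X hX Y hY a b ha hb hab i
    simp only [Set.mem_setOf_eq] at hX hY
    show 0 < a * X.2 i + b * Y.2 i
    rcases eq_or_lt_of_le ha with h | h
    · have hb1 : b = 1 := by linarith
      rw [← h, hb1]; simpa using hY i
    · have h1 : 0 < a * X.2 i := mul_pos h (hX i)
      have h2 : 0 ≤ b * Y.2 i := mul_nonneg hb (hY i).le
      linarith
  · intro X hX Y hY hne a b ha hb hab
    simp only [Set.mem_setOf_eq] at hX hY
    obtain ⟨m, s⟩ := X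
    obtain ⟨m', s'⟩ := Y
    simp only [smul_eq_mul, Prod.smul_mk, Prod.mk_add_mk, Pi.add_apply, Pi.smul_apply] at *
    -- linearization of the affine pieces
    have hL1 : ∀ j, (∑ i, v j i * (a * m i + b * m' i))
        = a * (∑ i, v j i * m i) + b * (∑ i, v j i * m' i) := fun j => sum_comb _ _ _ _ _
    have hL2 : ∀ j, (∑ i, (v j i) ^ 2 * (a * s i + b * s' i))
        = a * (∑ i, (v j i) ^ 2 * s i) + b * (∑ i, (v j i) ^ 2 * s' i) :=
      fun j => sum_comb _ _ _ _ _
    have hL3 : (∑ i, Om i i * (a * s i + b * s' i))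
        = a * (∑ i, Om i i * s i) + b * (∑ i, Om i i * s' i) := sum_comb _ _ _ _ _
    -- the exponential block
    have hexp : (∑ j, Real.exp ((∑ i, v j i * (a * m i + b * m' i))
          + (1 / 2) * (∑ i, (v j i) ^ 2 * (a * s i + b * s' i)) + c j))
        ≤ a * (∑ j, Real.exp ((∑ i, v j i * m i) + (1 / 2) * (∑ i, (v j i) ^ 2 * s i) + c j))
          + b * (∑ j, Real.exp ((∑ i, v j i * m' i)
            + (1 / 2) * (∑ i, (v j i) ^ 2 * s' i) + c j)) := by
      rw [Finset.mul_sum, Finset.mul_sum, ← Finset.sum_add_distrib]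
      refine Finset.sum_le_sum fun j _ => ?_
      have harg : (∑ i, v j i * (a * m i + b * m' i))
          + (1 / 2) * (∑ i, (v j i) ^ 2 * (a * s i + b * s' i)) + c j
          = a * ((∑ i, v j i * m i) + (1 / 2) * (∑ i, (v j i) ^ 2 * s i) + c j)
            + b * ((∑ i, v j i * m' i) + (1 / 2) * (∑ i, (v j i) ^ 2 * s' i) + c j) := by
        rw [hL1 j, hL2 j]; linear_combination (-(c j)) * hab
      rw [harg]
      exact exp_comb ha.le hb.le hab
    -- the linear block in m
    have hlin : (∑ j, x j * (∑ i, v j i * (a * m i + b * m' i)))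
        = a * (∑ j, x j * (∑ i, v j i * m i)) + b * (∑ j, x j * (∑ i, v j i * m' i)) := by
      rw [Finset.mul_sum, Finset.mul_sum, ← Finset.sum_add_distrib]
      refine Finset.sum_congr rfl fun j _ => ?_
      rw [hL1 j]; ring
    -- quadratic block
    have hquad := quad_comb Om hOsymm m m' a b hab
    have hquad_nonneg : 0 ≤ (m - m') ⬝ᵥ Om.mulVec (m - m') := by
      have := hOpd.posSemidef.dotProduct_mulVec_nonneg (m - m')
      simpa using this
    -- log block, nonstrict
    have hlog : a * (∑ i, Real.log (s i)) + b * (∑ i, Real.log (s' i))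
        ≤ ∑ i, Real.log (a * s i + b * s' i) := by
      rw [Finset.mul_sum, Finset.mul_sum, ← Finset.sum_add_distrib]
      exact Finset.sum_le_sum fun i _ => log_comb (hX i) (hY i) ha.le hb.le hab
    -- split the main sum
    simp only [Finset.sum_sub_distrib]
    have hms : m ≠ m' ∨ s ≠ s' := by
      by_contra h
      push_neg at h
      exact hne (by simp [Prod.ext_iff, h.1, h.2])
    rcases hms with hmm | hss
    · -- strictness from the quadratic part
      have hd : (m - m') ≠ 0 := sub_ne_zero.mpr hmm
      have hquad_pos : 0 < (m - m') ⬝ᵥ Om.mulVec (m - m') := by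
        have := hOpd.dotProduct_mulVec_pos hd
        simpa using this
      have habpos : 0 < a * b := mul_pos ha hb
      nlinarith [hexp, hlog, hlin, hL3, hquad, mul_pos habpos hquad_pos]
    · -- strictness from the log part
      obtain ⟨i0, hi0⟩ := Function.ne_iff.mp hss
      have hlog_strict : a * (∑ i, Real.log (s i)) + b * (∑ i, Real.log (s' i))
          < ∑ i, Real.log (a * s i + b * s' i) := by
        rw [Finset.mul_sum, Finset.mul_sum, ← Finset.sum_add_distrib]
        refine Finset.sum_lt_sum (fun i _ => log_comb (hX i) (hY i) ha.le hb.le hab)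
          ⟨i0, Finset.mem_univ _, log_comb_strict (hX i0) (hY i0) hi0 ha hb hab⟩
      nlinarith [hexp, hlin, hL3, hquad, hquad_nonneg, hlog_strict,
        mul_nonneg (mul_pos ha hb).le hquad_nonneg]
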